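/- arXiv:0903.4462 — 3 statements merged into one kernel-verified Lean document; each statement's English description precedes it below -/
import Mathlib

section
/- Let G be a topological group with a subgroup H, acting continuously on topological spaces X and Y. Suppose there exist: a continuous G-equivariant map f : X → Y; a point y₀ ∈ Y with h • y₀ = y₀ for all h ∈ H; and a continuous homotopy F : X × [0,1] → Y with F(x,0) = f(x) and F(x,1) = y₀ for all x, such that F(h • x, t) = h • F(x,t) for all h ∈ H, x ∈ X, t ∈ [0,1]. Then there exists a continuous map K : X × (G ⧸ H) × [0,1] → Y such that: (i) K(g • x, g • z, t) = g • K(x, z, t) for all g ∈ G, x ∈ X, z ∈ G ⧸ H, t ∈ [0,1]; (ii) K(x, z, 0) = f(x) for all x, z; and (iii) there is a continuous map c : G ⧸ H → Y with K(x, z, 1) = c(z) for all x, z. -/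
/-- If a continuous `G`-equivariant map `f : X → Y` is `H`-equivariantly homotopic to a
constant map (at an `H`-fixed point `y₀`), then there is a `G`-equivariant map from the
join `X * (G ⧸ H)` to `Y`, encoded as a map on `X × (G ⧸ H) × [0,1]` whose `t = 0` end
factors through the projection to `X` and whose `t = 1` end factors through the
projection to `G ⧸ H`. -/
theorem joinLemma {G X Y : Type*} [Group G] [TopologicalSpace G] [IsTopologicalGroup G]
    [TopologicalSpace X] [MulAction G X] [ContinuousSMul G X]
    [TopologicalSpace Y] [MulAction G Y] [ContinuousSMul G Y]
    (H : Subgroup G)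
    (f : C(X, Y)) (hf : ∀ (g : G) (x : X), f (g • x) = g • f x)
    (y₀ : Y) (hy₀ : ∀ h ∈ H, h • y₀ = y₀)
    (F : C(X × unitInterval, Y))
    (hF0 : ∀ x : X, F (x, 0) = f x) (hF1 : ∀ x : X, F (x, 1) = y₀)
    (hFequiv : ∀ h ∈ H, ∀ (x : X) (t : unitInterval), F (h • x, t) = h • F (x, t)) :
    ∃ K : C(X × (G ⧸ H) × unitInterval, Y),
      (∀ (g : G) (x : X) (z : G ⧸ H) (t : unitInterval),
        K (g • x, g • z, t) = g • K (x, z, t)) ∧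
      (∀ (x : X) (z : G ⧸ H), K (x, z, 0) = f x) ∧
      (∃ c : C(G ⧸ H, Y), ∀ (x : X) (z : G ⧸ H), K (x, z, 1) = c z) := by
  -- the candidate map, before descending to the quotient
  set Φ : X × G × unitInterval → Y := fun p => p.2.1 • F (p.2.1⁻¹ • p.1, p.2.2) with hΦ
  have hΦcont : Continuous Φ := by
    apply Continuous.smul (by fun_prop)
    exact F.continuous.comp (by fun_prop)
  -- well-definedness
  have key : ∀ (x : X) (t : unitInterval) (a : G) (h : G), h ∈ H →
      (a * h) • F ((a * h)⁻¹ • x, t) = a • F (a⁻¹ • x, t) := by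
    intro x t a h hh
    have := hFequiv h hh (h⁻¹ • a⁻¹ • x) t
    rw [smul_inv_smul] at this
    rw [mul_inv_rev, mul_smul h⁻¹, mul_smul, this]
  set k : X × (G ⧸ H) × unitInterval → Y := fun p =>
    Quotient.liftOn' p.2.1 (fun a => a • F (a⁻¹ • p.1, p.2.2)) (by
      intro a b hab
      rw [QuotientGroup.leftRel_apply] at hab
      have hb : b = a * (a⁻¹ * b) := by group
      rw [hb]
      exact (key p.1 p.2.2 a _ hab).symm) with hk
  have hkmk : ∀ (x : X) (a : G) (t : unitInterval),
      k (x, (a : G ⧸ H), t) = a • F (a⁻¹ • x, t) := fun _ _ _ => rfl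
  have hkcont : Continuous k := by
    have hq : IsOpenQuotientMap
        (Prod.map (id : X → X) (Prod.map (QuotientGroup.mk : G → G ⧸ H)
          (id : unitInterval → unitInterval))) :=
      IsOpenQuotientMap.id.prodMap (QuotientGroup.isOpenQuotientMap_mk.prodMap
        IsOpenQuotientMap.id)
    rw [← hq.continuous_comp_iff]
    exact hΦcont
  refine ⟨⟨k, hkcont⟩, ?_, ?_, ?_⟩
  · intro g x z t
    induction z using QuotientGroup.induction_on with
    | H a =>
      have : g • (a : G ⧸ H) = ((g * a : G) : G ⧸ H) := rfl
      simp only [ContinuousMap.coe_mk, this, hkmk]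
      rw [mul_inv_rev, mul_smul g, mul_smul, inv_smul_smul]
  · intro x z
    induction z using QuotientGroup.induction_on with
    | H a =>
      simp only [ContinuousMap.coe_mk, hkmk, hF0, hf, smul_inv_smul]
  · set c : G ⧸ H → Y := fun z => Quotient.liftOn' z (fun a => a • y₀) (by
      intro a b hab
      rw [QuotientGroup.leftRel_apply] at hab
      have hb : b = a * (a⁻¹ * b) := by group
      rw [hb]
      show a • y₀ = (a * (a⁻¹ * b)) • y₀
      rw [mul_smul, hy₀ _ hab]) with hc
    have hccont : Continuous c := by
      rw [← QuotientGroup.isOpenQuotientMap_mk.continuous_comp_iff]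
      exact continuous_id.smul continuous_const
    refine ⟨⟨c, hccont⟩, ?_⟩
    intro x z
    induction z using QuotientGroup.induction_on with
    | H a =>
      simp only [ContinuousMap.coe_mk, hkmk, hF1]
      rfl
end

section
/- Let X and Y be topological spaces equipped with continuous involutions τ : X → X and σ : Y → Y. Suppose f : X → Y is a continuous map with f ∘ τ = σ ∘ f which is homotopic to a constant map. Then there exist a point y₀ ∈ Y and a continuous map K : X × [−1,1] → Y such that K(τ x, −t) = σ(K(x, t)) for all x ∈ X, t ∈ [−1,1], and K(x, 1) = y₀ for all x ∈ X. -/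
/-- If a continuous map `f : X → Y` commuting with involutions `τ`, `σ` is homotopic to a
constant map, then there is a `ℤ/2`-equivariant map `K` from the unreduced suspension
`X × [-1,1]` of `X` (the join `X * ℤ/2`) to `Y` whose `t = 1` end is constant. -/
theorem involutionJoinLemma {X Y : Type*} [TopologicalSpace X] [TopologicalSpace Y]
    (τ : C(X, X)) (hτ : ∀ x, τ (τ x) = x)
    (σ : C(Y, Y)) (hσ : ∀ y, σ (σ y) = y)
    (f : C(X, Y)) (hf : ∀ x, f (τ x) = σ (f x))
    (hnull : ∃ y : Y, f.Homotopic (ContinuousMap.const X y)) :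
    ∃ (y₀ : Y) (K : C(X × (Set.Icc (-1 : ℝ) 1), Y)),
      (∀ (x : X) (t : Set.Icc (-1 : ℝ) 1),
        K (τ x, ⟨-(t : ℝ), ⟨by linarith [t.2.2], by linarith [t.2.1]⟩⟩) = σ (K (x, t))) ∧
      (∀ x : X, K (x, ⟨1, by norm_num⟩) = y₀) := by
  obtain ⟨y₀, ⟨H⟩⟩ := hnull
  -- A x t = H (clamp t, x), for t : ℝ
  set A : X → ℝ → Y := fun x t => H (Set.projIcc 0 1 (by norm_num) t, x) with hA
  have hAcont : Continuous fun p : X × ℝ => A p.1 p.2 := by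
    apply H.continuous.comp
    exact (continuous_projIcc.comp continuous_snd).prodMk continuous_fst
  have hA0 : ∀ x, A x 0 = f x := by
    intro x
    simp [hA, Set.projIcc, H.apply_zero]
  have hA1 : ∀ x, A x 1 = y₀ := by
    intro x
    simp [hA, Set.projIcc, H.apply_one]
  set F : X × ℝ → Y := fun p => if p.2 ≤ 0 then σ (A (τ p.1) (-p.2)) else A p.1 p.2 with hF
  have hFcont : Continuous F := by
    apply Continuous.if_le
    · exact σ.continuous.comp (hAcont.comp
        ((τ.continuous.comp continuous_fst).prodMk continuous_snd.neg))
    · exact hAcont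
    · exact continuous_snd
    · exact continuous_const
    · intro p hp
      simp only [hp, neg_zero]
      rw [hA0, hA0, hf, hσ]
  have hFeq : ∀ (x : X) (t : ℝ), F (τ x, -t) = σ (F (x, t)) := by
    intro x t
    by_cases h : t ≤ 0
    · simp only [hF, h, if_pos, if_true]
      by_cases h' : -t ≤ 0
      · have ht : t = 0 := le_antisymm h (by linarith)
        subst ht
        simp [hτ, hσ, hA0, hf]
      · rw [if_neg h', hσ]
    · have h' : -t ≤ 0 := by linarith
      simp only [hF, if_pos h', if_neg h, neg_neg, hτ]
  refine ⟨y₀, ⟨fun p => F (p.1, (p.2 : ℝ)),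
    hFcont.comp ((continuous_fst).prodMk (continuous_subtype_val.comp continuous_snd))⟩,
    ?_, ?_⟩
  · intro x t
    exact hFeq x t
  · intro x
    simp only [ContinuousMap.coe_mk, hF]
    rw [if_neg (by norm_num), hA1]
end

section
/- Let a ≥ 1 and l ≥ 1. If f : S^{a-1} → S^{l-1} is a continuous map satisfying f(−x) = −f(x) for all x ∈ S^{a-1}, and f is null-homotopic, then there exists a continuous map g : S^{a} → S^{l-1} satisfying g(−y) = −g(y) for all y ∈ S^{a}. -/
/-- The unit sphere `S^{n-1}` in `ℝ^n`. -/
noncomputable abbrev rSphere (n : ℕ) : Type :=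
  Metric.sphere (0 : EuclideanSpace ℝ (Fin n)) 1

open Set Metric

noncomputable def projC (a : ℕ) (y : EuclideanSpace ℝ (Fin (a+1))) : EuclideanSpace ℝ (Fin a) :=
  WithLp.toLp 2 (fun i : Fin a => y i.castSucc)

lemma projC_apply (a : ℕ) (y : EuclideanSpace ℝ (Fin (a+1))) (i : Fin a) :
    projC a y i = y i.castSucc := rfl

lemma projC_neg (a : ℕ) (y : EuclideanSpace ℝ (Fin (a+1))) : projC a (-y) = -projC a y := by
  ext i
  simp [projC_apply, PiLp.neg_apply]

lemma continuous_projC (a : ℕ) : Continuous (projC a) := by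
  refine (PiLp.continuous_toLp 2 (fun _ : Fin a => ℝ)).comp (continuous_pi fun i => ?_)
  exact (continuous_apply (Fin.castSucc i)).comp (PiLp.continuous_ofLp 2 (fun _ : Fin (a+1) => ℝ))

lemma euclid_norm_sq (n : ℕ) (x : EuclideanSpace ℝ (Fin n)) : ‖x‖^2 = ∑ i, x i ^ 2 := by
  rw [EuclideanSpace.norm_eq, Real.sq_sqrt (by positivity)]
  simp [Real.norm_eq_abs, sq_abs]

lemma norm_split (a : ℕ) (y : EuclideanSpace ℝ (Fin (a+1))) :
    ‖projC a y‖^2 + (y (Fin.last a))^2 = ‖y‖^2 := by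
  rw [euclid_norm_sq, euclid_norm_sq, Fin.sum_univ_castSucc]
  simp_rw [projC_apply]

namespace EqExt

variable {a l : ℕ}

/-- clamped parameter -/
noncomputable def θ (s : ℝ) : unitInterval := Set.projIcc 0 1 zero_le_one (2*s)

lemma θ_cont : Continuous θ := (continuous_projIcc).comp (by fun_prop)

lemma θ_zero : θ 0 = 0 := by simp [θ, Set.projIcc_of_mem]

lemma θ_one (s : ℝ) (hs : 1/2 ≤ s) : θ s = 1 := by
  apply Subtype.ext
  simp [θ, Set.projIcc, min_eq_left (by linarith : (1:ℝ) ≤ 2*s)]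

noncomputable def gluedG (f : C(rSphere a, rSphere l)) {y₀ : rSphere l}
    (H : f.Homotopy (ContinuousMap.const _ y₀)) (s : ℝ) (x : rSphere a) : rSphere l :=
  if 0 ≤ s then H (θ s, x) else -(H (θ (-s), -x))

variable {f : C(rSphere a, rSphere l)} {y₀ : rSphere l}
  (H : f.Homotopy (ContinuousMap.const _ y₀))

lemma gluedG_cont (hf : ∀ x, f (-x) = -f x) :
    Continuous (fun p : ℝ × rSphere a => gluedG f H p.1 p.2) := by
  refine Continuous.if_le ?_ ?_ continuous_const continuous_fst ?_
  · exact H.continuous.comp ((θ_cont.comp continuous_fst).prodMk continuous_snd)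
  · exact ((H.continuous.comp ((θ_cont.comp (continuous_neg.comp continuous_fst)).prodMk
      (continuous_neg.comp continuous_snd)))).neg
  · intro p hp
    rw [← hp]
    simp only [θ_zero, neg_zero, ContinuousMap.Homotopy.apply_zero, hf, neg_neg]

lemma gluedG_high (s : ℝ) (hs : 1/2 ≤ s) (x : rSphere a) : gluedG f H s x = y₀ := by
  rw [gluedG, if_pos (by linarith), θ_one s hs, H.apply_one]; rfl

lemma gluedG_low (s : ℝ) (hs : s ≤ -(1/2)) (x : rSphere a) : gluedG f H s x = -y₀ := by
  rw [gluedG, if_neg (by push_neg; linarith), θ_one (-s) (by linarith), H.apply_one]; rfl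

lemma gluedG_neg (hf : ∀ x, f (-x) = -f x) (s : ℝ) (x : rSphere a) :
    gluedG f H (-s) (-x) = -gluedG f H s x := by
  simp only [gluedG]
  rcases lt_trichotomy s 0 with h | h | h
  · rw [if_pos (by linarith), if_neg (by linarith), neg_neg]
  · subst h
    rw [neg_zero, if_pos le_rfl, if_pos le_rfl, θ_zero,
      ContinuousMap.Homotopy.apply_zero, ContinuousMap.Homotopy.apply_zero, hf]
  · rw [if_neg (by linarith), if_pos (by linarith), neg_neg, neg_neg]

end EqExt

namespace EqExt

open Classical in
/-- Normalization map with junk value `e` at `0`. -/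
noncomputable def hatS (a : ℕ) (e : rSphere a) (v : EuclideanSpace ℝ (Fin a)) : rSphere a :=
  if h : v = 0 then e else ⟨‖v‖⁻¹ • v, by
    simp [mem_sphere_zero_iff_norm, norm_smul, inv_mul_cancel₀ (norm_ne_zero_iff.mpr h)]⟩

lemma hatS_neg (a : ℕ) (e : rSphere a) (v : EuclideanSpace ℝ (Fin a)) (h : v ≠ 0) :
    hatS a e (-v) = -(hatS a e v) := by
  rw [hatS, dif_neg (neg_ne_zero.mpr h), hatS, dif_neg h]
  apply Subtype.ext
  simp [smul_neg]

end EqExt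

/-- If an antipodally equivariant map `f : S^{a-1} → S^{l-1}` is null-homotopic, then there
is an antipodally equivariant map `S^{a} → S^{l-1}`. -/
theorem equivariant_extension_of_nullhomotopic (a l : ℕ) (ha : 1 ≤ a) (hl : 1 ≤ l)
    (f : C(rSphere a, rSphere l)) (hf : ∀ x, f (-x) = -f x)
    (hnull : ∃ y : rSphere l, f.Homotopic (ContinuousMap.const _ y)) :
    ∃ g : C(rSphere (a + 1), rSphere l), ∀ y, g (-y) = -g y := by
  classical
  obtain ⟨y₀, ⟨H⟩⟩ := hnull
  let e : rSphere a := ⟨EuclideanSpace.single ⟨0, ha⟩ (1:ℝ), by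
    simp [mem_sphere_zero_iff_norm, EuclideanSpace.norm_single]⟩
  set T : rSphere (a+1) → ℝ := fun y => (y : EuclideanSpace ℝ (Fin (a+1))) (Fin.last a) with hTdef
  set P : rSphere (a+1) → EuclideanSpace ℝ (Fin a) := fun y => projC a ↑y with hPdef
  let g0 : rSphere (a+1) → rSphere l := fun y => EqExt.gluedG f H (T y) (EqExt.hatS a e (P y))
  have hTc : Continuous T :=
    (continuous_apply (Fin.last a)).comp
      ((PiLp.continuous_ofLp 2 (fun _ : Fin (a+1) => ℝ)).comp continuous_subtype_val)
  have hPc : Continuous P := (continuous_projC a).comp continuous_subtype_val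
  have hGc := EqExt.gluedG_cont H hf
  have hnorm : ∀ y : rSphere (a+1), ‖P y‖^2 + (T y)^2 = 1 := by
    intro y
    have h1 := norm_split a (↑y : EuclideanSpace ℝ (Fin (a+1)))
    rw [mem_sphere_zero_iff_norm.mp y.2] at h1
    simpa using h1
  have hPzero : ∀ y, P y = 0 → T y = 1 ∨ T y = -1 := by
    intro y h
    have h1 := hnorm y
    rw [h, norm_zero] at h1
    have h2 : (T y - 1) * (T y + 1) = 0 := by nlinarith
    rcases mul_eq_zero.mp h2 with h3 | h3
    · exact Or.inl (by linarith)
    · exact Or.inr (by linarith)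
  have hTneg : ∀ y : rSphere (a+1), T (-y) = -(T y) := fun y => rfl
  have hPneg : ∀ y : rSphere (a+1), P (-y) = -(P y) := by
    intro y
    show projC a (↑(-y)) = -(projC a ↑y)
    rw [coe_neg_sphere, projC_neg]
  refine ⟨⟨g0, ?_⟩, ?_⟩
  · rw [continuous_iff_continuousAt]
    intro y
    by_cases hy : P y = 0
    · rcases hPzero y hy with h1 | h1
      · refine Filter.EventuallyEq.continuousAt (y := y₀) ?_
        have hmem : {z : rSphere (a+1) | 1/2 < T z} ∈ nhds y :=
          (isOpen_lt continuous_const hTc).mem_nhds (by simp [Set.mem_setOf_eq, h1]; norm_num)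
        filter_upwards [hmem] with z hz
        exact EqExt.gluedG_high H (T z) (le_of_lt hz) _
      · refine Filter.EventuallyEq.continuousAt (y := -y₀) ?_
        have hmem : {z : rSphere (a+1) | T z < -(1/2)} ∈ nhds y :=
          (isOpen_lt hTc continuous_const).mem_nhds (by simp [Set.mem_setOf_eq, h1]; norm_num)
        filter_upwards [hmem] with z hz
        exact EqExt.gluedG_low H (T z) (le_of_lt hz) _
    · have hUopen : IsOpen {z : rSphere (a+1) | P z ≠ 0} :=
        (isOpen_compl_iff.mpr isClosed_singleton).preimage hPc
      have h1 : ContinuousAt (fun z => ‖P z‖⁻¹ • P z) y :=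
        ((hPc.norm.continuousAt).inv₀ (norm_ne_zero_iff.mpr hy)).smul hPc.continuousAt
      have hev : (fun z => ((EqExt.hatS a e (P z) : rSphere a) : EuclideanSpace ℝ (Fin a)))
          =ᶠ[nhds y] fun z => ‖P z‖⁻¹ • P z := by
        filter_upwards [hUopen.mem_nhds hy] with z hz
        rw [EqExt.hatS, dif_neg hz]
      have h3 : ContinuousAt (fun z => EqExt.hatS a e (P z)) y := by
        rw [Topology.IsInducing.continuousAt_iff Topology.IsInducing.subtypeVal]
        exact h1.congr hev.symm
      exact hGc.continuousAt.comp (hTc.continuousAt.prodMk h3)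
  · intro y
    by_cases hy : P y = 0
    · have hy' : P (-y) = 0 := by rw [hPneg, hy, neg_zero]
      show EqExt.gluedG f H (T (-y)) (EqExt.hatS a e (P (-y)))
          = -(EqExt.gluedG f H (T y) (EqExt.hatS a e (P y)))
      rw [hTneg, hy', hy]
      rcases hPzero y hy with h1 | h1 <;> rw [h1]
      · rw [EqExt.gluedG_high H 1 (by norm_num) _, EqExt.gluedG_low H (-1) (by norm_num) _]
      · rw [EqExt.gluedG_low H (-1) (by norm_num) _, neg_neg,
          EqExt.gluedG_high H 1 (by norm_num) _, neg_neg]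
    · show EqExt.gluedG f H (T (-y)) (EqExt.hatS a e (P (-y)))
          = -(EqExt.gluedG f H (T y) (EqExt.hatS a e (P y)))
      rw [hTneg, hPneg, EqExt.hatS_neg a e _ hy]
      exact EqExt.gluedG_neg H hf _ _
end
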